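/- Let m, n, k with n = m + k, let Y have density proportional to (1 + ‖y‖²)^(−(m+k)/2) on ℝ^k, and let a_n be an independent chi random variable with n degrees of freedom. Then the random variable b = a_n / √(1 + ‖Y‖²) is chi distributed with m degrees of freedom, i.e. has density proportional to b^(m−1) exp(−b²/2) on (0,∞). -/

import Mathlib

open MeasureTheory Real
open scoped ENNReal

/-- Measure on `ℝ` with density proportional to the chi density with `n` degrees of
freedom, `t^(n-1) exp(-t²/2)` on `(0,∞)`. -/
noncomputable def chiMeasure (n : ℕ) (c : ℝ) : Measure ℝ :=
  volume.withDensity fun t =>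
    ENNReal.ofReal (c * if 0 < t then t ^ ((n : ℝ) - 1) * Real.exp (-t ^ 2 / 2) else 0)

/-- Measure on `ℝ^k` with the multivariate Student-t density `∝ (1+‖y‖²)^(-(m+k)/2)`. -/
noncomputable def studentMeasure (m k : ℕ) (c : ℝ) : Measure (EuclideanSpace ℝ (Fin k)) :=
  volume.withDensity fun y =>
    ENNReal.ofReal (c * (1 + ‖y‖ ^ 2) ^ (-((m : ℝ) + k) / 2))

namespace ScaleChiAux

/-- The chi density with `n` degrees of freedom. -/
noncomputable def chiD (n : ℕ) (c : ℝ) (t : ℝ) : ℝ≥0∞ :=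
  ENNReal.ofReal (c * if 0 < t then t ^ ((n : ℝ) - 1) * Real.exp (-t ^ 2 / 2) else 0)

lemma chiMeasure_eq (n : ℕ) (c : ℝ) : chiMeasure n c = volume.withDensity (chiD n c) := rfl

lemma chiD_meas (n : ℕ) (c : ℝ) : Measurable (chiD n c) := by
  refine Measurable.ennreal_ofReal (measurable_const.mul ?_)
  exact Measurable.ite measurableSet_Ioi (by fun_prop) measurable_const

lemma lintegral_gauss (k : ℕ) {b : ℝ} (hb : 0 < b) :
    ∫⁻ y : EuclideanSpace ℝ (Fin k), ENNReal.ofReal (Real.exp (-b * ‖y‖ ^ 2))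
      = ENNReal.ofReal ((π / b) ^ ((k : ℝ) / 2)) := by
  have hI : Integrable (fun v : EuclideanSpace ℝ (Fin k) => Real.exp (-b * ‖v‖ ^ 2)) := by
    have h := (GaussianFourier.integrable_cexp_neg_mul_sq_norm_add
      (V := EuclideanSpace ℝ (Fin k)) (b := (b : ℂ)) (by simpa using hb) 0 0).re
    refine h.congr (Filter.Eventually.of_forall fun v => ?_)
    have : -(b : ℂ) * (‖v‖ : ℂ) ^ 2 + 0 * ((inner ℝ (0 : EuclideanSpace ℝ (Fin k)) v : ℝ) : ℂ)
        = ((-b * ‖v‖ ^ 2 : ℝ) : ℂ) := by push_cast; ring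
    simp only [this, RCLike.re_to_complex, Complex.exp_ofReal_re]
  rw [← ofReal_integral_eq_lintegral_ofReal hI
      (Filter.Eventually.of_forall fun v => (Real.exp_pos _).le)]
  congr 1
  have := GaussianFourier.integral_rexp_neg_mul_sq_norm
    (V := EuclideanSpace ℝ (Fin k)) hb
  rw [this, finrank_euclideanSpace_fin]

lemma scale (f : ℝ → ℝ≥0∞) (hf : Measurable f) {s : ℝ} (hs : 0 < s)
    {A : Set ℝ} (hA : MeasurableSet A) :
    volume.withDensity f ((fun a : ℝ => a / s) ⁻¹' A)
      = ∫⁻ t, A.indicator (fun t => ENNReal.ofReal s * f (t * s)) t := by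
  have hpre : MeasurableSet ((fun a : ℝ => a / s) ⁻¹' A) := (measurable_id.div_const s) hA
  have hmeas : Measurable (A.indicator fun t => f (t * s)) :=
    (hf.comp (measurable_mul_const s)).indicator hA
  rw [withDensity_apply _ hpre, ← lintegral_indicator hpre]
  have key : ∀ a : ℝ, ((fun a : ℝ => a / s) ⁻¹' A).indicator f a
      = A.indicator (fun t => f (t * s)) (a * s⁻¹) := by
    intro a
    have h1 : a * s⁻¹ = a / s := (div_eq_mul_inv a s).symm
    rw [h1]
    by_cases h : a / s ∈ A
    · rw [Set.indicator_of_mem h, Set.indicator_of_mem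
        (show a ∈ (fun a : ℝ => a / s) ⁻¹' A from h) f, div_mul_cancel₀ a hs.ne']
    · rw [Set.indicator_of_notMem h, Set.indicator_of_notMem
        (show a ∉ (fun a : ℝ => a / s) ⁻¹' A from h) f]
  calc ∫⁻ a, ((fun a : ℝ => a / s) ⁻¹' A).indicator f a
      = ∫⁻ a, A.indicator (fun t => f (t * s)) (a * s⁻¹) := by simp_rw [key]
    _ = ∫⁻ t, A.indicator (fun t => f (t * s)) t ∂(Measure.map (· * s⁻¹) volume) :=
        (lintegral_map hmeas (measurable_mul_const _)).symm
    _ = ENNReal.ofReal s * ∫⁻ t, A.indicator (fun t => f (t * s)) t := by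
        rw [Real.map_volume_mul_right (inv_ne_zero hs.ne'), lintegral_smul_measure, inv_inv,
          abs_of_pos hs, smul_eq_mul]
    _ = ∫⁻ t, A.indicator (fun t => ENNReal.ofReal s * f (t * s)) t := by
        rw [← lintegral_const_mul _ hmeas]
        congr 1; funext t
        by_cases h : t ∈ A <;> simp [Set.indicator, h]

lemma inner_integral (m n k : ℕ) (hn : n = m + k) (ca cY : ℝ)
    (hca : 0 < ca) (hcY : 0 < cY) (t : ℝ) :
    ∫⁻ y : EuclideanSpace ℝ (Fin k),
        ENNReal.ofReal (cY * (1 + ‖y‖ ^ 2) ^ (-((m : ℝ) + k) / 2))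
          * ENNReal.ofReal (Real.sqrt (1 + ‖y‖ ^ 2))
          * chiD n ca (t * Real.sqrt (1 + ‖y‖ ^ 2))
      = chiD m (ca * cY * (2 * π) ^ ((k : ℝ) / 2)) t := by
  have hnr : (n : ℝ) = (m : ℝ) + (k : ℝ) := by rw [hn]; push_cast; ring
  by_cases ht : 0 < t
  · -- positive case
    have step : ∀ y : EuclideanSpace ℝ (Fin k),
        ENNReal.ofReal (cY * (1 + ‖y‖ ^ 2) ^ (-((m : ℝ) + k) / 2))
          * ENNReal.ofReal (Real.sqrt (1 + ‖y‖ ^ 2))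
          * chiD n ca (t * Real.sqrt (1 + ‖y‖ ^ 2))
        = ENNReal.ofReal (ca * cY * t ^ ((n : ℝ) - 1) * Real.exp (-t ^ 2 / 2))
          * ENNReal.ofReal (Real.exp (-(t ^ 2 / 2) * ‖y‖ ^ 2)) := by
      intro y
      have hr0 : (0 : ℝ) ≤ ‖y‖ ^ 2 := sq_nonneg _
      have hu : (0 : ℝ) < 1 + ‖y‖ ^ 2 := by linarith
      have hsqrt0 : (0 : ℝ) < Real.sqrt (1 + ‖y‖ ^ 2) := Real.sqrt_pos.2 hu
      have hts : 0 < t * Real.sqrt (1 + ‖y‖ ^ 2) := mul_pos ht hsqrt0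
      unfold chiD
      rw [if_pos hts]
      rw [← ENNReal.ofReal_mul (by positivity), ← ENNReal.ofReal_mul (by positivity),
        ← ENNReal.ofReal_mul (by positivity)]
      congr 1
      set u : ℝ := 1 + ‖y‖ ^ 2 with hu_def
      have e1 : (t * Real.sqrt u) ^ ((n : ℝ) - 1)
          = t ^ ((n : ℝ) - 1) * Real.sqrt u ^ ((n : ℝ) - 1) :=
        Real.mul_rpow ht.le (Real.sqrt_nonneg _)
      have e2 : u ^ (-((m : ℝ) + k) / 2) * (Real.sqrt u ^ ((n : ℝ) - 1) * Real.sqrt u) = 1 := by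
        rw [Real.sqrt_eq_rpow, ← Real.rpow_mul hu.le, ← Real.rpow_add hu, ← Real.rpow_add hu]
        rw [show -((m : ℝ) + k) / 2 + (1 / 2 * ((n : ℝ) - 1) + 1 / 2) = 0 by
          rw [hnr]; ring]
        exact Real.rpow_zero u
      have e3 : (t * Real.sqrt u) ^ 2 = t ^ 2 * u := by
        rw [mul_pow, Real.sq_sqrt hu.le]
      have e4 : Real.exp (-t ^ 2 / 2) * Real.exp (-(t ^ 2 / 2) * ‖y‖ ^ 2)
          = Real.exp (-(t ^ 2 * u) / 2) := by
        rw [← Real.exp_add]; congr 1; rw [hu_def]; ring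
      calc cY * u ^ (-((m : ℝ) + k) / 2) * Real.sqrt u
            * (ca * ((t * Real.sqrt u) ^ ((n : ℝ) - 1) * Real.exp (-(t * Real.sqrt u) ^ 2 / 2)))
          = (u ^ (-((m : ℝ) + k) / 2) * (Real.sqrt u ^ ((n : ℝ) - 1) * Real.sqrt u))
            * (ca * cY * t ^ ((n : ℝ) - 1) * Real.exp (-(t ^ 2 * u) / 2)) := by
            rw [e1, e3]; ring
        _ = ca * cY * t ^ ((n : ℝ) - 1)
            * (Real.exp (-t ^ 2 / 2) * Real.exp (-(t ^ 2 / 2) * ‖y‖ ^ 2)) := by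
            rw [e2, e4]; ring
        _ = ca * cY * t ^ ((n : ℝ) - 1) * Real.exp (-t ^ 2 / 2)
            * Real.exp (-(t ^ 2 / 2) * ‖y‖ ^ 2) := by ring
    simp_rw [step]
    rw [lintegral_const_mul' _ _ ENNReal.ofReal_ne_top]
    have hb : (0 : ℝ) < t ^ 2 / 2 := by positivity
    have hg : ∫⁻ y : EuclideanSpace ℝ (Fin k),
        ENNReal.ofReal (Real.exp (-(t ^ 2 / 2) * ‖y‖ ^ 2))
        = ENNReal.ofReal ((π / (t ^ 2 / 2)) ^ ((k : ℝ) / 2)) := lintegral_gauss k hb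
    rw [hg, ← ENNReal.ofReal_mul (by positivity)]
    unfold chiD
    rw [if_pos ht]
    congr 1
    have h3 : ((t : ℝ) ^ 2) ^ ((k : ℝ) / 2) = t ^ (k : ℝ) := by
      rw [← Real.rpow_natCast t 2, ← Real.rpow_mul ht.le]
      congr 1
      push_cast
      ring
    have h4 : t ^ ((n : ℝ) - 1) * (t ^ ((k : ℝ)))⁻¹ = t ^ ((m : ℝ) - 1) := by
      rw [← Real.rpow_neg ht.le, ← Real.rpow_add ht]
      congr 1
      rw [hnr]; ring
    have h2 : (π / (t ^ 2 / 2)) ^ ((k : ℝ) / 2)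
        = (2 * π) ^ ((k : ℝ) / 2) * (t ^ (k : ℝ))⁻¹ := by
      rw [show π / (t ^ 2 / 2) = (2 * π) / t ^ 2 by ring,
        Real.div_rpow (by positivity) (by positivity), h3, div_eq_mul_inv]
    rw [h2]
    calc ca * cY * t ^ ((n : ℝ) - 1) * Real.exp (-t ^ 2 / 2)
          * ((2 * π) ^ ((k : ℝ) / 2) * (t ^ ((k : ℝ)))⁻¹)
        = ca * cY * (2 * π) ^ ((k : ℝ) / 2)
          * ((t ^ ((n : ℝ) - 1) * (t ^ ((k : ℝ)))⁻¹) * Real.exp (-t ^ 2 / 2)) := by ring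
      _ = ca * cY * (2 * π) ^ ((k : ℝ) / 2) * (t ^ ((m : ℝ) - 1) * Real.exp (-t ^ 2 / 2)) := by
          rw [h4]
  · -- nonpositive case
    have step : ∀ y : EuclideanSpace ℝ (Fin k),
        ENNReal.ofReal (cY * (1 + ‖y‖ ^ 2) ^ (-((m : ℝ) + k) / 2))
          * ENNReal.ofReal (Real.sqrt (1 + ‖y‖ ^ 2))
          * chiD n ca (t * Real.sqrt (1 + ‖y‖ ^ 2)) = 0 := by
      intro y
      have hr0 : (0 : ℝ) ≤ ‖y‖ ^ 2 := sq_nonneg _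
      have hu : (0 : ℝ) < 1 + ‖y‖ ^ 2 := by linarith
      have hsqrt0 : (0 : ℝ) < Real.sqrt (1 + ‖y‖ ^ 2) := Real.sqrt_pos.2 hu
      have hts : ¬ 0 < t * Real.sqrt (1 + ‖y‖ ^ 2) := by
        push_neg at ht ⊢
        exact mul_nonpos_iff.2 (Or.inr ⟨ht, hsqrt0.le⟩)
      unfold chiD
      rw [if_neg hts, mul_zero, ENNReal.ofReal_zero, mul_zero]
    simp_rw [step]
    rw [lintegral_zero]
    unfold chiD
    rw [if_neg ht, mul_zero, ENNReal.ofReal_zero]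

end ScaleChiAux

open ScaleChiAux in
/-- Second claim of Theorem 2: `b = aₙ/√(1+‖Y‖²)` is chi distributed with `m` degrees
of freedom. -/
theorem scale_factor_is_chi (m n k : ℕ) (hn : n = m + k) (ca cY : ℝ)
    (hca : 0 < ca) (hcY : 0 < cY)
    (ha : IsProbabilityMeasure (chiMeasure n ca))
    (hY : IsProbabilityMeasure (studentMeasure m k cY)) :
    ∃ c' : ℝ, 0 < c' ∧
      ((chiMeasure n ca).prod (studentMeasure m k cY)).map
          (fun p : ℝ × EuclideanSpace ℝ (Fin k) => p.1 / Real.sqrt (1 + ‖p.2‖ ^ 2)) =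
        chiMeasure m c' := by
  haveI := ha; haveI := hY
  refine ⟨ca * cY * (2 * π) ^ ((k : ℝ) / 2), by positivity, ?_⟩
  set E := EuclideanSpace ℝ (Fin k)
  set s : E → ℝ := fun y => Real.sqrt (1 + ‖y‖ ^ 2) with hs_def
  have hs : ∀ y : E, 0 < s y := fun y => Real.sqrt_pos.2 (by positivity)
  have hsmeas : Measurable s :=
    (measurable_const.add (measurable_norm.pow_const 2)).sqrt
  have hφ : Measurable fun p : ℝ × E => p.1 / Real.sqrt (1 + ‖p.2‖ ^ 2) :=
    measurable_fst.div
      ((measurable_const.add (measurable_snd.norm.pow_const 2)).sqrt)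
  have hgD : Measurable fun y : E =>
      ENNReal.ofReal (cY * (1 + ‖y‖ ^ 2) ^ (-((m : ℝ) + k) / 2)) :=
    by fun_prop
  ext A hA
  rw [Measure.map_apply hφ hA, Measure.prod_apply_symm (hφ hA)]
  have step1 : ∀ y : E,
      chiMeasure n ca ((fun x : ℝ => (x, y)) ⁻¹'
          ((fun p : ℝ × E => p.1 / Real.sqrt (1 + ‖p.2‖ ^ 2)) ⁻¹' A))
        = ∫⁻ t, A.indicator (fun t => ENNReal.ofReal (s y) * chiD n ca (t * s y)) t := by
    intro y
    rw [chiMeasure_eq]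
    exact scale (chiD n ca) (chiD_meas n ca) (hs y) hA
  rw [lintegral_congr step1]
  rw [show studentMeasure m k cY = volume.withDensity (fun y : E =>
      ENNReal.ofReal (cY * (1 + ‖y‖ ^ 2) ^ (-((m : ℝ) + k) / 2))) from rfl]
  rw [lintegral_withDensity_eq_lintegral_mul_non_measurable _ hgD
      (Filter.Eventually.of_forall fun y => ENNReal.ofReal_lt_top)]
  -- K y t
  set K : E → ℝ → ℝ≥0∞ := fun y t =>
    ENNReal.ofReal (cY * (1 + ‖y‖ ^ 2) ^ (-((m : ℝ) + k) / 2))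
      * A.indicator (fun t => ENNReal.ofReal (s y) * chiD n ca (t * s y)) t with hK_def
  have hKrw : (fun y : E => (fun y : E =>
        ENNReal.ofReal (cY * (1 + ‖y‖ ^ 2) ^ (-((m : ℝ) + k) / 2))) y
      * ∫⁻ t, A.indicator (fun t => ENNReal.ofReal (s y) * chiD n ca (t * s y)) t)
      = fun y : E => ∫⁻ t, K y t := by
    funext y
    rw [hK_def]
    exact (lintegral_const_mul' _ _ ENNReal.ofReal_ne_top).symm
  have hKmeas : Measurable (Function.uncurry K) := by
    have h1 : (fun p : E × ℝ =>
        A.indicator (fun t => ENNReal.ofReal (s p.1) * chiD n ca (t * s p.1)) p.2)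
        = Set.indicator (Prod.snd ⁻¹' A)
            (fun p : E × ℝ => ENNReal.ofReal (s p.1) * chiD n ca (p.2 * s p.1)) := by
      funext p
      by_cases h : p.2 ∈ A <;> simp [Set.indicator, h]
    have h2 : Measurable (fun p : E × ℝ =>
        A.indicator (fun t => ENNReal.ofReal (s p.1) * chiD n ca (t * s p.1)) p.2) := by
      rw [h1]
      exact (((hsmeas.comp measurable_fst).ennreal_ofReal).mul
        ((chiD_meas n ca).comp (measurable_snd.mul (hsmeas.comp measurable_fst)))).indicator
        (measurable_snd hA)
    exact (hgD.comp measurable_fst).mul h2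
  calc ∫⁻ y, ((fun y : E =>
          ENNReal.ofReal (cY * (1 + ‖y‖ ^ 2) ^ (-((m : ℝ) + k) / 2)))
        * fun y => ∫⁻ t, A.indicator
            (fun t => ENNReal.ofReal (s y) * chiD n ca (t * s y)) t) y
      = ∫⁻ y, ∫⁻ t, K y t := by
        simp only [Pi.mul_apply]
        exact congrArg (lintegral volume) hKrw
    _ = ∫⁻ t, ∫⁻ y, K y t := lintegral_lintegral_swap hKmeas.aemeasurable
    _ = ∫⁻ t, A.indicator (chiD m (ca * cY * (2 * π) ^ ((k : ℝ) / 2))) t := by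
        refine lintegral_congr fun t => ?_
        by_cases h : t ∈ A
        · rw [Set.indicator_of_mem h]
          have : ∀ y : E, K y t
              = ENNReal.ofReal (cY * (1 + ‖y‖ ^ 2) ^ (-((m : ℝ) + k) / 2))
                * ENNReal.ofReal (s y) * chiD n ca (t * s y) := by
            intro y
            simp only [hK_def, Set.indicator_of_mem h, mul_assoc]
          rw [lintegral_congr this]
          exact inner_integral m n k hn ca cY hca hcY t
        · rw [Set.indicator_of_notMem h]
          have : ∀ y : E, K y t = 0 := by
            intro y
            simp only [hK_def, Set.indicator_of_notMem h, mul_zero]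
          rw [lintegral_congr this, lintegral_zero]
    _ = chiMeasure m (ca * cY * (2 * π) ^ ((k : ℝ) / 2)) A := by
        rw [lintegral_indicator hA, chiMeasure_eq, withDensity_apply _ hA]
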